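/- arXiv:1009.4170 — 5 statements merged into one kernel-verified Lean document; each statement's English description precedes it below -/
import Mathlib

section
/- For any skew diagram λ/μ (where μ ⊆ λ as Young diagrams), the partition cols(λ/μ), formed by sorting the column lengths of λ/μ into decreasing order, is dominated by the conjugate of the partition rows(λ/μ), formed by sorting the row lengths of λ/μ into decreasing order. -/
def part (l : List ℕ) (i : ℕ) : ℕ := l.getD i 0

def IsPartitionOf (n : ℕ) (l : List ℕ) : Prop :=
  l.Pairwise (· ≥ ·) ∧ (∀ p ∈ l, 0 < p) ∧ l.sum = n

def Dom (a b : ℕ → ℕ) : Prop :=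
  ∀ i, ∑ j ∈ Finset.range i, a j ≤ ∑ j ∈ Finset.range i, b j

def conj (l : List ℕ) (i : ℕ) : ℕ := (l.filter (fun p => decide (i + 1 ≤ p))).length

/-- The list of column lengths of the skew diagram `l/m`: the `j`-th column
has length `l'ⱼ - m'ⱼ`. -/
def colLens (l m : List ℕ) : List ℕ :=
  (List.range (part l 0)).map (fun j => conj l j - conj m j)

/-- The `k`-th part (0-indexed) of the conjugate of `rows(l/m)`: the number of
rows of the skew diagram `l/m` of length at least `k+1`. -/
def rowsConj (l m : List ℕ) (k : ℕ) : ℕ :=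
  ((Finset.range l.length).filter (fun i => k + 1 ≤ part l i - part m i)).card

lemma sum_part_range (l : List ℕ) (k : ℕ) :
    ∑ t ∈ Finset.range k, part l t = (l.take k).sum := by
  induction l generalizing k with
  | nil => simp [part]
  | cons a t ih =>
    cases k with
    | zero => simp
    | succ k =>
      rw [Finset.sum_range_succ']
      simp only [part, List.getD_cons_succ, List.getD_cons_zero]
      have := ih k
      simp only [part] at this
      rw [this, List.take_succ_cons, List.sum_cons, add_comm]

lemma conj_eq_sum (l : List ℕ) (j : ℕ) :
    conj l j = ∑ i ∈ Finset.range l.length, if j + 1 ≤ part l i then 1 else 0 := by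
  induction l with
  | nil => simp [conj]
  | cons a t ih =>
    simp only [conj] at ih ⊢
    rw [List.filter_cons, List.length_cons, Finset.sum_range_succ']
    simp only [part, List.getD_cons_succ, List.getD_cons_zero]
    simp only [part] at ih
    erw [← ih]
    by_cases h : j + 1 ≤ a <;> simp [h]

lemma conj_diff (l m : List ℕ) (hmlen : m.length ≤ l.length)
    (hsub : ∀ i, part m i ≤ part l i) (j : ℕ) :
    conj l j - conj m j
      = ((Finset.range l.length).filter (fun i => part m i ≤ j ∧ j < part l i)).card := by
  rw [conj_eq_sum, conj_eq_sum, Finset.card_filter]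
  have hm' : ∑ i ∈ Finset.range m.length, (if j + 1 ≤ part m i then (1:ℕ) else 0)
      = ∑ i ∈ Finset.range l.length, (if j + 1 ≤ part m i then (1:ℕ) else 0) := by
    apply Finset.sum_subset (Finset.range_subset_range.mpr hmlen)
    intro i _ hi
    simp only [Finset.mem_range, not_lt] at hi
    have : part m i = 0 := List.getD_eq_default _ _ hi
    simp [this]
  rw [hm', ← Finset.sum_tsub_distrib]
  · apply Finset.sum_congr rfl
    intro i _
    have := hsub i
    split_ifs <;> omega
  · intro i _
    have := hsub i
    split_ifs <;> omega

lemma range_filter_lt (k r : ℕ) :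
    ((Finset.range k).filter (fun t => t < r)) = Finset.range (min k r) := by
  ext t
  simp only [Finset.mem_filter, Finset.mem_range, lt_min_iff]

lemma sum_ite_le (k r : ℕ) :
    ∑ t ∈ Finset.range k, (if t + 1 ≤ r then (1:ℕ) else 0) = min r k := by
  induction k with
  | zero => simp
  | succ k ih =>
    rw [Finset.sum_range_succ, ih]
    split_ifs with h <;> omega

lemma sum_rowsConj (l m : List ℕ) (k : ℕ) :
    ∑ t ∈ Finset.range k, rowsConj l m t
      = ∑ i ∈ Finset.range l.length, min (part l i - part m i) k := by
  unfold rowsConj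
  simp_rw [Finset.card_filter]
  rw [Finset.sum_comm]
  apply Finset.sum_congr rfl
  intro i _
  exact sum_ite_le k _

/-- For a skew diagram `l/m`, the partition `cols(l/m)` (the decreasing
rearrangement `c` of the column lengths) is dominated by the conjugate of the
partition `rows(l/m)` formed by the row lengths. -/
theorem cols_dom_rowsConj (nl nm : ℕ) (l m : List ℕ)
    (hl : IsPartitionOf nl l) (hm : IsPartitionOf nm m)
    (hsub : ∀ i, part m i ≤ part l i)
    (c : List ℕ) (hc : c.Perm (colLens l m)) (hcs : c.Pairwise (· ≥ ·)) :
    Dom (part c) (rowsConj l m) := by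
  have hmlen : m.length ≤ l.length := by
    by_contra h
    push_neg at h
    have h1 : part l l.length = 0 := List.getD_eq_default _ _ le_rfl
    have h2 : 0 < part m l.length := by
      have hmem : m.getD l.length 0 ∈ m := by
        rw [List.getD_eq_getElem m 0 h]
        exact List.getElem_mem h
      exact hm.2.1 _ hmem
    have := hsub l.length
    omega
  intro k
  rw [sum_part_range, sum_rowsConj]
  -- find a subset S of columns realizing the sum of the first k parts of c
  have hsubperm : List.Subperm (c.take k) (colLens l m) :=
    (List.take_sublist k c).subperm.trans hc.subperm
  obtain ⟨u, hu_perm, hu_sub⟩ := hsubperm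
  obtain ⟨v, hv_sub, rfl⟩ := List.sublist_map_iff.mp hu_sub
  have hv_nodup : v.Nodup := hv_sub.nodup List.nodup_range
  set S : Finset ℕ := v.toFinset with hS
  have hScard : S.card ≤ k := by
    have h1 : S.card = v.length := List.toFinset_card_of_nodup hv_nodup
    have h2 : v.length = (c.take k).length := by
      have := hu_perm.length_eq
      simpa using this
    rw [h1, h2]
    simpa using List.length_take_le k c
  have hsum : (c.take k).sum = ∑ j ∈ S, (conj l j - conj m j) := by
    rw [← hu_perm.sum_eq, hS, List.sum_toFinset _ hv_nodup]
  rw [hsum]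
  -- rewrite each column length as a count of rows
  calc ∑ j ∈ S, (conj l j - conj m j)
      = ∑ j ∈ S, ((Finset.range l.length).filter
          (fun i => part m i ≤ j ∧ j < part l i)).card := by
        apply Finset.sum_congr rfl
        intro j _
        exact conj_diff l m hmlen hsub j
    _ = ∑ i ∈ Finset.range l.length, (S.filter (fun j => part m i ≤ j ∧ j < part l i)).card := by
        simp_rw [Finset.card_filter]
        rw [Finset.sum_comm]
    _ ≤ ∑ i ∈ Finset.range l.length, min (part l i - part m i) k := by
        apply Finset.sum_le_sum
        intro i _
        apply le_min
        · calc (S.filter (fun j => part m i ≤ j ∧ j < part l i)).card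
              ≤ (Finset.Ico (part m i) (part l i)).card := by
                apply Finset.card_le_card
                intro j hj
                simp only [Finset.mem_filter] at hj
                simp only [Finset.mem_Ico]
                exact hj.2
            _ = part l i - part m i := Nat.card_Ico _ _
        · exact le_trans (Finset.card_le_card (Finset.filter_subset _ _)) hScard
end

section
/- In the dominance lattice on partitions of n, if μ covers λ then μ is obtained from λ by moving exactly one box: there exist indices i < j with μᵢ = λᵢ + 1, μⱼ = λⱼ − 1, and μₖ = λₖ for all k ∉ {i, j}. -/
lemma part_eq_zero (l : List ℕ) (k : ℕ) (h : l.length ≤ k) : part l k = 0 :=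
  List.getD_eq_default _ _ h

lemma part_pos (l : List ℕ) (hpos : ∀ p ∈ l, 0 < p) (k : ℕ) (h : k < l.length) :
    0 < part l k := by
  have : part l k = l[k] := List.getD_eq_getElem _ _ h
  rw [this]; exact hpos _ (List.getElem_mem h)

lemma part_set (l : List ℕ) (i v k : ℕ) (h : i < l.length) :
    part (l.set i v) k = if k = i then v else part l k := by
  unfold part
  rcases eq_or_ne k i with rfl|hk
  · simp [List.getD, h]
  · simp [List.getD, List.getElem?_set_ne (Ne.symm hk), hk]

lemma sum_part (l : List ℕ) (N : ℕ) (h : l.length ≤ N) :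
    ∑ k ∈ Finset.range N, part l k = l.sum := by
  induction l generalizing N with
  | nil => simp [part]
  | cons a t ih =>
    cases N with
    | zero => simp at h
    | succ N =>
      rw [Finset.sum_range_succ']
      simp only [show ∀ k, part (a::t) (k+1) = part t k from fun k => rfl,
        show part (a::t) 0 = a from rfl]
      rw [ih N (by simpa using h)]
      simp [add_comm]

lemma sorted_iff_part (l : List ℕ) :
    l.Pairwise (· ≥ ·) ↔ ∀ a b : ℕ, a ≤ b → part l b ≤ part l a := by
  constructor
  · intro hs a b hab
    by_cases hb : b < l.length
    · have ha : a < l.length := lt_of_le_of_lt hab hb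
      have := List.pairwise_iff_get.1 hs
      rcases eq_or_lt_of_le hab with rfl|hab'
      · exact le_refl _
      · have h2 := this ⟨a, ha⟩ ⟨b, hb⟩ hab'
        rw [show part l a = l[a] from List.getD_eq_getElem _ _ ha,
          show part l b = l[b] from List.getD_eq_getElem _ _ hb]
        exact h2
    · rw [part_eq_zero l b (le_of_not_gt hb)]; exact Nat.zero_le _
  · intro h
    rw [List.pairwise_iff_get]
    intro i j hij
    have := h i j (le_of_lt hij)
    rwa [show part l i = l[i.1] from List.getD_eq_getElem _ _ i.2,
      show part l (j:ℕ) = l[j.1] from List.getD_eq_getElem _ _ j.2] at this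

lemma part_inj (l m : List ℕ) (hl : ∀ p ∈ l, 0 < p) (hm : ∀ p ∈ m, 0 < p)
    (h : ∀ k, part l k = part m k) : l = m := by
  induction l generalizing m with
  | nil =>
    cases m with
    | nil => rfl
    | cons b t =>
      have := h 0
      have hb := hm b (List.mem_cons_self)
      simp [part] at this; omega
  | cons a t ih =>
    cases m with
    | nil =>
      have := h 0
      have ha := hl a (List.mem_cons_self)
      simp [part] at this; omega
    | cons b s =>
      have h0 : a = b := h 0
      have : t = s := ih s (fun p hp => hl p (List.mem_cons_of_mem _ hp))
        (fun p hp => hm p (List.mem_cons_of_mem _ hp)) (fun k => h (k+1))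
      rw [h0, this]

lemma part_all_zero (l : List ℕ) (h : ∀ p ∈ l, p = 0) (k : ℕ) : part l k = 0 := by
  induction l generalizing k with
  | nil => rfl
  | cons a t ih =>
    cases k with
    | zero => exact h a (List.mem_cons_self)
    | succ k => exact ih (fun p hp => h p (List.mem_cons_of_mem _ hp)) k

lemma part_filter (l : List ℕ) (h : l.Pairwise (· ≥ ·)) (k : ℕ) :
    part (l.filter (· != 0)) k = part l k := by
  induction l generalizing k with
  | nil => rfl
  | cons a t ih =>
    by_cases ha : a = 0
    · subst ha
      have hz : ∀ p ∈ t, p = 0 := by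
        intro p hp
        have := (List.pairwise_cons.1 h).1 p hp
        omega
      have : (0::t).filter (· != 0) = [] := by
        simp only [List.filter_cons]
        norm_num
        exact hz
      rw [this]
      cases k with
      | zero => rfl
      | succ k =>
        show part [] (k+1) = part t k
        rw [part_all_zero t hz]
        rfl
    · have : (a::t).filter (· != 0) = a :: t.filter (· != 0) := by
        simp [List.filter_cons, ha]
      rw [this]
      cases k with
      | zero => rfl
      | succ k =>
        show part (t.filter (· != 0)) k = part t k
        exact ih (List.pairwise_cons.1 h).2 k

/-- In the dominance lattice on partitions of `n`, if `m` covers `l` then `m`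
is obtained from `l` by moving exactly one box: there are indices `i < j` with
`mᵢ = lᵢ + 1`, `mⱼ = lⱼ - 1`, and `mₖ = lₖ` for all other `k`. -/
theorem cover_is_single_box_move (n : ℕ) (l m : List ℕ)
    (hl : IsPartitionOf n l) (hm : IsPartitionOf n m)
    (hdom : Dom (part l) (part m)) (hne : l ≠ m)
    (hcov : ∀ ν, IsPartitionOf n ν → Dom (part l) (part ν) → Dom (part ν) (part m) →
      ν = l ∨ ν = m) :
    ∃ i j, i < j ∧ part m i = part l i + 1 ∧ part m j + 1 = part l j ∧
      ∀ k, k ≠ i → k ≠ j → part m k = part l k := by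
  obtain ⟨hlsort, hlpos, hlsum⟩ := hl
  obtain ⟨hmsort, hmpos, hmsum⟩ := hm
  have hLanti : ∀ a b : ℕ, a ≤ b → part l b ≤ part l a := (sorted_iff_part l).1 hlsort
  have hManti : ∀ a b : ℕ, a ≤ b → part m b ≤ part m a := (sorted_iff_part m).1 hmsort
  -- the first index where l and m differ
  have hdiff : ∃ k, part l k ≠ part m k := by
    by_contra hc
    push_neg at hc
    exact hne (part_inj l m hlpos hmpos hc)
  obtain ⟨i, hi, hmin⟩ : ∃ i, part l i ≠ part m i ∧ ∀ t, t < i → part l t = part m t :=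
    ⟨Nat.find hdiff, Nat.find_spec hdiff, fun t ht => of_not_not (Nat.find_min hdiff ht)⟩
  have hSi : ∑ t ∈ Finset.range i, part l t = ∑ t ∈ Finset.range i, part m t :=
    Finset.sum_congr rfl (fun t ht => hmin t (Finset.mem_range.1 ht))
  have hLi : part l i < part m i := by
    have := hdom (i+1)
    rw [Finset.sum_range_succ, Finset.sum_range_succ, hSi] at this
    omega
  have him : i < m.length := by
    by_contra hc
    have := part_eq_zero m i (le_of_not_gt hc)
    omega
  -- the first index j > i where the partial sums agree again
  have hj0 : ∃ k, i < k ∧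
      (∑ t ∈ Finset.range (k+1), part l t) = ∑ t ∈ Finset.range (k+1), part m t := by
    refine ⟨l.length + m.length + i, by omega, ?_⟩
    rw [sum_part _ _ (by omega), sum_part _ _ (by omega), hlsum, hmsum]
  obtain ⟨j, hij, hSj1, hjmin⟩ : ∃ j, i < j ∧
      ((∑ t ∈ Finset.range (j+1), part l t) = ∑ t ∈ Finset.range (j+1), part m t) ∧
      ∀ k, k < j → ¬ (i < k ∧
        (∑ t ∈ Finset.range (k+1), part l t) = ∑ t ∈ Finset.range (k+1), part m t) :=
    ⟨Nat.find hj0, (Nat.find_spec hj0).1, (Nat.find_spec hj0).2,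
      fun k hk => Nat.find_min hj0 hk⟩
  -- strict inequality of partial sums in between
  have hmid : ∀ k, i < k → k ≤ j →
      (∑ t ∈ Finset.range k, part l t) + 1 ≤ ∑ t ∈ Finset.range k, part m t := by
    intro k hk1 hk2
    have hle := hdom k
    rcases eq_or_lt_of_le (Nat.succ_le_of_lt hk1) with h|h
    · rw [← h, Finset.sum_range_succ, Finset.sum_range_succ, hSi]
      omega
    · have hklt : k - 1 < j := by omega
      have hne2 := hjmin _ hklt
      have hk1' : i < k - 1 := by omega
      have hkk : k - 1 + 1 = k := by omega
      rw [hkk] at hne2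
      have hB : (∑ t ∈ Finset.range k, part l t) ≠ ∑ t ∈ Finset.range k, part m t :=
        fun hB => hne2 ⟨hk1', hB⟩
      omega
  have hLjgt : part m j < part l j := by
    have h1 := hmid j hij le_rfl
    have hA : ∑ t ∈ Finset.range (j+1), part l t
        = (∑ t ∈ Finset.range j, part l t) + part l j := Finset.sum_range_succ _ _
    have hB : ∑ t ∈ Finset.range (j+1), part m t
        = (∑ t ∈ Finset.range j, part m t) + part m j := Finset.sum_range_succ _ _
    omega
  have hstep : part l (j+1) < part l j := by
    have h3 := hdom (j+2)
    have hA : ∑ t ∈ Finset.range (j+2), part l t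
        = (∑ t ∈ Finset.range (j+1), part l t) + part l (j+1) := Finset.sum_range_succ _ _
    have hB : ∑ t ∈ Finset.range (j+2), part m t
        = (∑ t ∈ Finset.range (j+1), part m t) + part m (j+1) := Finset.sum_range_succ _ _
    have h4 := hManti j (j+1) (by omega)
    omega
  have hLjpos : 0 < part l j := by omega
  have hjlen : j < l.length := by
    by_contra hc
    have := part_eq_zero l j (le_of_not_gt hc)
    omega
  have hilen : i < l.length := lt_trans hij hjlen
  have hprev : ∀ a, a < i → part l i + 1 ≤ part l a := by
    intro a ha
    have h1 := hmin a ha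
    have h2 := hManti a i ha.le
    omega
  -- the intermediate partition ν obtained from l by one box move
  set ν : List ℕ := ((l.set i (part l i + 1)).set j (part l j - 1)).filter (· != 0) with hνdef
  have hP : ∀ k, part ((l.set i (part l i + 1)).set j (part l j - 1)) k =
      if k = j then part l j - 1 else if k = i then part l i + 1 else part l k := by
    intro k
    rw [part_set _ j _ k (by simpa using hjlen), part_set _ i _ k hilen]
  have hPanti : ∀ a b : ℕ, a ≤ b →
      part ((l.set i (part l i + 1)).set j (part l j - 1)) b ≤
      part ((l.set i (part l i + 1)).set j (part l j - 1)) a := by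
    intro a b hab
    rw [hP a, hP b]
    by_cases hbj : b = j
    · rw [if_pos hbj]
      by_cases haj : a = j
      · rw [if_pos haj]
      · rw [if_neg haj]
        by_cases hai : a = i
        · rw [if_pos hai]
          have := hLanti i j hij.le
          omega
        · rw [if_neg hai]
          have := hLanti a j (by omega)
          omega
    · rw [if_neg hbj]
      by_cases hbi : b = i
      · rw [if_pos hbi]
        have haj : a ≠ j := by omega
        rw [if_neg haj]
        by_cases hai : a = i
        · rw [if_pos hai]
        · rw [if_neg hai]
          have := hprev a (by omega)
          omega
      · rw [if_neg hbi]
        by_cases haj : a = j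
        · rw [if_pos haj]
          have h1 := hLanti (j+1) b (by omega)
          have h2 := hLanti b b le_rfl
          subst haj
          omega
        · rw [if_neg haj]
          by_cases hai : a = i
          · rw [if_pos hai]
            have := hLanti i b (by omega)
            omega
          · rw [if_neg hai]
            exact hLanti a b hab
  have hl2sort : ((l.set i (part l i + 1)).set j (part l j - 1)).Pairwise (· ≥ ·) :=
    (sorted_iff_part _).2 hPanti
  have hνpart : ∀ k, part ν k =
      if k = j then part l j - 1 else if k = i then part l i + 1 else part l k := by
    intro k
    rw [hνdef, part_filter _ hl2sort k, hP k]
  have hν_i : part ν i = part l i + 1 := by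
    rw [hνpart, if_neg hij.ne, if_pos rfl]
  have hν_j : part ν j = part l j - 1 := by
    rw [hνpart, if_pos rfl]
  have hν_o : ∀ k, k ≠ i → k ≠ j → part ν k = part l k := by
    intro k h1 h2
    rw [hνpart, if_neg h2, if_neg h1]
  have hνsort : ν.Pairwise (· ≥ ·) := hl2sort.filter _
  have hνpos : ∀ p ∈ ν, 0 < p := by
    intro p hp
    have := (List.mem_filter.1 hp).2
    simp only [bne_iff_ne, ne_eq] at this
    omega
  have hS : ∀ k, ∑ t ∈ Finset.range k, part ν t =
      (∑ t ∈ Finset.range k, part l t) + (if i < k ∧ k ≤ j then 1 else 0) := by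
    intro k
    induction k with
    | zero => simp
    | succ k ih =>
      rw [Finset.sum_range_succ, Finset.sum_range_succ, ih]
      rcases eq_or_ne k i with rfl|hki
      · rw [hν_i]
        split_ifs <;> omega
      · rcases eq_or_ne k j with rfl|hkj
        · rw [hν_j]
          split_ifs <;> omega
        · rw [hν_o k hki hkj]
          split_ifs <;> omega
  have hνsum : ν.sum = n := by
    have hlenν : ν.length ≤ l.length := by
      rw [hνdef]
      refine le_trans (List.length_filter_le _ _) ?_
      simp
    have h1 := sum_part ν (l.length + m.length + j + 1) (by omega)
    have h2 := sum_part l (l.length + m.length + j + 1) (by omega)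
    have h3 := hS (l.length + m.length + j + 1)
    rw [if_neg (by omega)] at h3
    omega
  have hd1 : Dom (part l) (part ν) := by
    intro k
    rw [hS k]
    split_ifs <;> omega
  have hd2 : Dom (part ν) (part m) := by
    intro k
    rw [hS k]
    by_cases hc : i < k ∧ k ≤ j
    · rw [if_pos hc]
      exact hmid k hc.1 hc.2
    · rw [if_neg hc]
      simpa using hdom k
  rcases hcov ν ⟨hνsort, hνpos, hνsum⟩ hd1 hd2 with h|h
  · exfalso
    have := hν_i
    rw [h] at this
    omega
  · rw [h] at hν_i hν_j hν_o
    exact ⟨i, j, hij, hν_i, by omega, hν_o⟩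
end

section
/- The number of partitions in the dominance interval [(a,1^{y+1}), (a+1,1^y)] (all partitions ν of a+y+1 with (a,1^{y+1}) ⪯ ν ⪯ (a+1,1^y)) is exactly 3 when a ≥ 3 and y ≥ 1; namely the interval consists of (a,1^{y+1}), (a,2,1^{y−1}), and (a+1,1^y). -/
lemma sum_range_part (l : List ℕ) (i : ℕ) :
    ∑ j ∈ Finset.range i, part l j = (l.take i).sum := by
  induction l generalizing i with
  | nil => simp [part]
  | cons x t ih =>
    cases i with
    | zero => simp
    | succ n =>
      rw [Finset.sum_range_succ']
      have hstep : ∀ j, part (x :: t) (j + 1) = part t j := fun j => rfl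
      have h0 : part (x :: t) 0 = x := rfl
      simp only [hstep, ih n, h0, List.take_succ_cons, List.sum_cons]
      omega

lemma eq_rep_of_head_le_one (l : List ℕ) (hs : l.Pairwise (· ≥ ·))
    (hp : ∀ p ∈ l, 0 < p) (h1 : (l.take 1).sum ≤ 1) :
    l = List.replicate l.sum 1 := by
  cases l with
  | nil => simp
  | cons b t =>
    have hb : b ≤ 1 := by simpa using h1
    have hall : ∀ p ∈ b :: t, p = 1 := by
      intro p hp'
      have h2 := hp p hp'
      rcases List.mem_cons.mp hp' with rfl | hmem
      · omega
      · have := (List.pairwise_cons.mp hs).1 p hmem; omega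
    have hrep : (b :: t) = List.replicate (b :: t).length 1 :=
      (List.eq_replicate_length).mpr hall
    have hsum : (b :: t).sum = (b :: t).length := by
      conv_lhs => rw [hrep]
      simp
    rw [hsum, ← hrep]

lemma take_hook (c m i : ℕ) :
    ((c :: List.replicate m 1).take i).sum = if i = 0 then 0 else c + min (i - 1) m := by
  cases i with
  | zero => simp
  | succ n => simp [List.take_replicate, List.sum_replicate]

lemma take_mid (c d m i : ℕ) :
    ((c :: d :: List.replicate m 1).take i).sum =
      if i = 0 then 0 else if i = 1 then c else c + d + min (i - 2) m := by
  match i with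
  | 0 => simp
  | 1 => simp
  | n + 2 => simp [List.take_replicate, List.sum_replicate, Nat.add_assoc]

lemma sorted_hook (c m : ℕ) (h : 1 ≤ c) : (c :: List.replicate m 1).Pairwise (· ≥ ·) := by
  rw [List.pairwise_cons]
  constructor
  · intro b hb; rw [List.mem_replicate] at hb; omega
  · induction m with
    | zero => simp
    | succ n ih =>
      rw [List.replicate_succ, List.pairwise_cons]
      exact ⟨fun b hb => by rw [List.mem_replicate] at hb; omega, ih⟩

lemma sorted_mid (c m : ℕ) (h : 2 ≤ c) : (c :: 2 :: List.replicate m 1).Pairwise (· ≥ ·) := by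
  rw [List.pairwise_cons]
  refine ⟨?_, sorted_hook 2 m (by omega)⟩
  intro b hb
  rcases List.mem_cons.mp hb with rfl | hb
  · omega
  · rw [List.mem_replicate] at hb; omega

/-- For `a ≥ 3` and `y ≥ 1` the dominance interval `[(a,1^{y+1}), (a+1,1^y)]`
on partitions of `a + y + 1` consists of exactly the three distinct partitions
`(a,1^{y+1})`, `(a,2,1^{y-1})` and `(a+1,1^y)`. -/
theorem hook_interval_three_elements (a y : ℕ) (ha : 3 ≤ a) (hy : 1 ≤ y) :
    (∀ ν, (IsPartitionOf (a + y + 1) ν ∧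
        Dom (part (a :: List.replicate (y + 1) 1)) (part ν) ∧
        Dom (part ν) (part ((a + 1) :: List.replicate y 1))) ↔
      (ν = a :: List.replicate (y + 1) 1 ∨
       ν = a :: 2 :: List.replicate (y - 1) 1 ∨
       ν = (a + 1) :: List.replicate y 1)) ∧
    a :: List.replicate (y + 1) 1 ≠ a :: 2 :: List.replicate (y - 1) 1 ∧
    a :: 2 :: List.replicate (y - 1) 1 ≠ (a + 1) :: List.replicate y 1 ∧
    a :: List.replicate (y + 1) 1 ≠ (a + 1) :: List.replicate y 1 := by
  refine ⟨?_, ?_, ?_, ?_⟩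
  · intro ν
    constructor
    · rintro ⟨⟨hs, hp, hsum⟩, hL, hU⟩
      rcases ν with _ | ⟨x, t⟩
      · simp at hsum
      have hL1 := hL 1
      have hU1 := hU 1
      have hU2 := hU 2
      have hU3 := hU 3
      have e1 : (x :: t).take 1 = [x] := rfl
      have e2 : (x :: t).take 2 = x :: t.take 1 := rfl
      have e3 : (x :: t).take 3 = x :: t.take 2 := rfl
      simp only [sum_range_part] at hL1 hU1 hU2 hU3
      rw [e1] at hL1 hU1
      rw [e2] at hU2
      rw [e3] at hU3
      simp [take_hook] at hL1 hU1 hU2 hU3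
      have hsx : x + t.sum = a + y + 1 := by simpa using hsum
      have hts : t.Pairwise (· ≥ ·) := (List.pairwise_cons.mp hs).2
      have htp : ∀ p ∈ t, 0 < p := fun p hp' => hp p (List.mem_cons_of_mem x hp')
      rcases (show x = a ∨ x = a + 1 by omega) with rfl | rfl
      · -- x = a
        by_cases h1 : (t.take 1).sum ≤ 1
        · left
          have hrep := eq_rep_of_head_le_one t hts htp h1
          have hty : t.sum = y + 1 := by omega
          rw [hrep, hty]
        · right; left
          rcases t with _ | ⟨b, t'⟩
          · simp at h1
          have hb : b = 2 := by
            have hb1 : (List.take 1 (b :: t')).sum = b := by simp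
            rw [hb1] at h1
            omega
          subst hb
          have e4 : (2 :: t').take 2 = 2 :: t'.take 1 := rfl
          rw [e4] at hU3
          simp only [List.sum_cons] at hU3 hsx
          have h3 : (t'.take 1).sum ≤ 1 := by omega
          have hts' : t'.Pairwise (· ≥ ·) := (List.pairwise_cons.mp hts).2
          have htp' : ∀ p ∈ t', 0 < p := fun p hp' => htp p (List.mem_cons_of_mem 2 hp')
          have hrep := eq_rep_of_head_le_one t' hts' htp' h3
          have hsum' : t'.sum = y - 1 := by omega
          rw [hrep, hsum']
      · -- x = a + 1
        right; right
        have h1 : (t.take 1).sum ≤ 1 := by omega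
        have hrep := eq_rep_of_head_le_one t hts htp h1
        have hty : t.sum = y := by omega
        rw [hrep, hty]
    · have domcheck : ∀ l l' : List ℕ,
          (∀ i, (l.take i).sum ≤ (l'.take i).sum) → Dom (part l) (part l') := by
        intro l l' h i
        rw [sum_range_part, sum_range_part]
        exact h i
      rintro (rfl | rfl | rfl)
      · refine ⟨⟨sorted_hook a (y + 1) (by omega), ?_, by simp <;> omega⟩,
          domcheck _ _ ?_, domcheck _ _ ?_⟩
        · intro p hp'
          rcases List.mem_cons.mp hp' with rfl | hp'
          · omega
          · rw [List.mem_replicate] at hp'; omega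
        · intro i; rfl
        · intro i
          rcases i with _ | _ | n <;> simp only [take_hook] <;> simp <;> omega
      · refine ⟨⟨sorted_mid a (y - 1) (by omega), ?_, by simp <;> omega⟩,
          domcheck _ _ ?_, domcheck _ _ ?_⟩
        · intro p hp'
          rcases List.mem_cons.mp hp' with rfl | hp'
          · omega
          rcases List.mem_cons.mp hp' with rfl | hp'
          · omega
          · rw [List.mem_replicate] at hp'; omega
        · intro i
          rcases i with _ | _ | n <;> simp only [take_hook, take_mid] <;> simp <;> omega
        · intro i
          rcases i with _ | _ | n <;> simp only [take_hook, take_mid] <;> simp <;> omega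
      · refine ⟨⟨sorted_hook (a + 1) y (by omega), ?_, by simp <;> omega⟩,
          domcheck _ _ ?_, domcheck _ _ ?_⟩
        · intro p hp'
          rcases List.mem_cons.mp hp' with rfl | hp'
          · omega
          · rw [List.mem_replicate] at hp'; omega
        · intro i
          rcases i with _ | _ | n <;> simp only [take_hook] <;> simp <;> omega
        · intro i; rfl
  · intro h
    have h2 : List.replicate (y + 1) 1 = 2 :: List.replicate (y - 1) 1 := by
      injection h
    rw [List.replicate_succ] at h2
    injection h2 with h1 _
    omega
  · intro h
    injection h with h1 _
    omega
  · intro h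
    injection h with h1 _
    omega
end

section
/- For x ≥ y ≥ 1, the dominance interval from (1^{x+y}) to (2^y, 1^{x−y}) is the saturated chain (1^{x+y}) ≺ (2, 1^{x+y−2}) ≺ (2², 1^{x+y−4}) ≺ ⋯ ≺ (2^y, 1^{x−y}); in particular it has exactly y + 1 elements, namely the partitions (2^k, 1^{x+y−2k}) for 0 ≤ k ≤ y. -/
/-- The partition `(2^k, 1^{x+y-2k})` of `x + y`. -/
def pk (x y k : ℕ) : List ℕ := List.replicate k 2 ++ List.replicate (x + y - 2 * k) 1

lemma part_pk (x y k : ℕ) (h : 2*k ≤ x+y) (i : ℕ) :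
    part (pk x y k) i = if i < k then 2 else if i < x + y - k then 1 else 0 := by
  simp [part, pk, List.getD_eq_getElem?_getD, List.getElem?_append, List.getElem?_replicate]
  split_ifs <;> simp_all <;> omega

lemma sum_pk (x y k : ℕ) (h : 2*k ≤ x+y) (i : ℕ) :
    ∑ j ∈ Finset.range i, part (pk x y k) j = min (2*i) (min (i+k) (x+y)) := by
  induction i with
  | zero => simp
  | succ n ih => rw [Finset.sum_range_succ, ih, part_pk x y k h n]; split_ifs <;> omega

lemma dom_pk_iff (x y a b : ℕ) (ha : 2*a ≤ x+y) (hb : 2*b ≤ x+y) :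
    Dom (part (pk x y a)) (part (pk x y b)) ↔ a ≤ b := by
  constructor
  · intro h
    have := h a
    rw [sum_pk x y a ha, sum_pk x y b hb] at this
    omega
  · intro h i
    rw [sum_pk x y a ha, sum_pk x y b hb]
    omega

lemma pk_partition (x y k : ℕ) (h : 2*k ≤ x+y) : IsPartitionOf (x+y) (pk x y k) := by
  refine ⟨?_, ?_, ?_⟩
  · unfold pk
    rw [List.pairwise_append]
    refine ⟨List.pairwise_replicate.mpr (by simp), List.pairwise_replicate.mpr (by simp), ?_⟩
    intro a ha b hb
    rw [List.eq_of_mem_replicate ha, List.eq_of_mem_replicate hb]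
    omega
  · intro p hp
    rcases List.mem_append.mp hp with h' | h' <;>
      rw [List.eq_of_mem_replicate h'] <;> omega
  · rw [pk, List.sum_append, List.sum_replicate, List.sum_replicate]
    simp
    omega

lemma sorted_two_one (l : List ℕ) (hs : l.Pairwise (· ≥ ·)) (h1 : ∀ p ∈ l, 0 < p)
    (h2 : ∀ p ∈ l, p ≤ 2) :
    l = List.replicate (l.count 2) 2 ++ List.replicate (l.count 1) 1 := by
  induction l with
  | nil => simp
  | cons a t ih =>
    rw [List.pairwise_cons] at hs
    have ha1 := h1 a (by simp)
    have ha2 := h2 a (by simp)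
    interval_cases a
    · have ht1 : ∀ b ∈ t, b = 1 := fun b hb =>
        le_antisymm (hs.1 b hb) (h1 b (by simp [hb]))
      have hc2 : (1 :: t).count 2 = 0 := by
        rw [List.count_eq_zero]
        intro hmem
        rcases List.mem_cons.mp hmem with h | h
        · omega
        · exact absurd (ht1 _ h) (by omega)
      have hc1 : (1 :: t).count 1 = t.length + 1 := by
        rw [List.count_cons_self, List.count_eq_length.mpr (fun b hb => (ht1 b hb).symm)]
      rw [hc2, hc1]
      simp [List.replicate_succ]
      exact List.eq_replicate_of_mem ht1
    · have := ih hs.2 (fun p hp => h1 p (by simp [hp])) (fun p hp => h2 p (by simp [hp]))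
      rw [List.count_cons_self, List.count_cons_of_ne (by norm_num), List.replicate_succ]
      rw [List.cons_append]
      exact congrArg (2 :: ·) this

/-- Any partition of `x+y` dominated by `pk x y b` (with `1 ≤ b`, `2b ≤ x+y`) is some `pk x y c`
with `2c ≤ x+y`. -/
lemma dom_classify (x y b : ℕ) (_hb1 : 1 ≤ b) (hb : 2*b ≤ x+y) (ν : List ℕ)
    (hν : IsPartitionOf (x+y) ν) (hd : Dom (part ν) (part (pk x y b))) :
    ∃ c, 2*c ≤ x+y ∧ ν = pk x y c := by
  obtain ⟨hs, hpos, hsum⟩ := hν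
  -- all parts are at most 2
  have hle2 : ∀ p ∈ ν, p ≤ 2 := by
    have h1 := hd 1
    rw [sum_pk x y b hb 1, Finset.sum_range_one] at h1
    have hhead : part ν 0 ≤ 2 := by omega
    intro p hp
    rcases ν with _ | ⟨a, t⟩
    · simp at hp
    · rw [List.pairwise_cons] at hs
      have : part (a :: t) 0 = a := rfl
      rcases List.mem_cons.mp hp with h | h
      · omega
      · have := hs.1 p h; omega
  have hstruct := sorted_two_one ν hs hpos hle2
  set c := ν.count 2 with hc
  set m := ν.count 1 with hm
  have hsum2 : 2*c + m = x + y := by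
    rw [hstruct, List.sum_append, List.sum_replicate, List.sum_replicate] at hsum
    simp at hsum
    omega
  refine ⟨c, by omega, ?_⟩
  rw [hstruct, pk]
  congr 1
  congr 1
  omega

/-- For `x ≥ y ≥ 1` the dominance interval from `(1^{x+y})` to `(2^y, 1^{x-y})`
is the saturated chain of the partitions `(2^k, 1^{x+y-2k})`, `0 ≤ k ≤ y`:
these are exactly the elements of the interval, consecutive ones are covers,
and they are pairwise distinct, so the interval has exactly `y + 1` elements. -/
theorem column_times_column_interval (x y : ℕ) (hy : 1 ≤ y) (hxy : y ≤ x) :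
    (∀ ν, (IsPartitionOf (x + y) ν ∧
        Dom (part (pk x y 0)) (part ν) ∧ Dom (part ν) (part (pk x y y))) ↔
      ∃ k ≤ y, ν = pk x y k) ∧
    (∀ k, k < y →
      Dom (part (pk x y k)) (part (pk x y (k + 1))) ∧ pk x y k ≠ pk x y (k + 1) ∧
      ∀ τ, IsPartitionOf (x + y) τ → Dom (part (pk x y k)) (part τ) →
        Dom (part τ) (part (pk x y (k + 1))) → τ = pk x y k ∨ τ = pk x y (k + 1)) ∧
    (∀ k k', k ≤ y → k' ≤ y → pk x y k = pk x y k' → k = k') := by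
  have hyxy : 2*y ≤ x+y := by omega
  have hlen : ∀ k, k ≤ y → (pk x y k).length = x + y - k := by
    intro k hk
    rw [pk, List.length_append, List.length_replicate, List.length_replicate]
    omega
  refine ⟨?_, ?_, ?_⟩
  · intro ν
    constructor
    · rintro ⟨hν, -, hdy⟩
      obtain ⟨c, hc, rfl⟩ := dom_classify x y y hy hyxy ν hν hdy
      exact ⟨c, (dom_pk_iff x y c y hc hyxy).mp hdy, rfl⟩
    · rintro ⟨k, hk, rfl⟩
      have hk2 : 2*k ≤ x+y := by omega
      exact ⟨pk_partition x y k hk2,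
        (dom_pk_iff x y 0 k (by omega) hk2).mpr (by omega),
        (dom_pk_iff x y k y hk2 hyxy).mpr hk⟩
  · intro k hk
    have hk2 : 2*k ≤ x+y := by omega
    have hk2' : 2*(k+1) ≤ x+y := by omega
    refine ⟨(dom_pk_iff x y k (k+1) hk2 hk2').mpr (by omega), ?_, ?_⟩
    · intro h
      have := congrArg List.length h
      rw [hlen k (by omega), hlen (k+1) (by omega)] at this
      omega
    · intro τ hτ hd1 hd2
      obtain ⟨j, hj, rfl⟩ := dom_classify x y (k+1) (by omega) hk2' τ hτ hd2
      have h1 := (dom_pk_iff x y k j hk2 hj).mp hd1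
      have h2 := (dom_pk_iff x y j (k+1) hj hk2').mp hd2
      have : j = k ∨ j = k + 1 := by omega
      rcases this with h | h <;> subst h
      · exact Or.inl rfl
      · exact Or.inr rfl
  · intro k k' hk hk' h
    have := congrArg List.length h
    rw [hlen k hk, hlen k' hk'] at this
    omega
end

section
/- If λ/μ is a skew diagram such that cols(λ/μ) = rows(λ/μ)' (the sorted column lengths equal the conjugate of the sorted row lengths), then either λ/μ is (a translate of) the Young diagram of a partition or the π-rotation of one; conversely, if λ/μ equals a partition diagram ν or its π-rotation ν^π, then cols(λ/μ) = rows(λ/μ)' = ν'. -/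
/-- The cells of the skew diagram `l/m`. -/
def skewCells (l m : List ℕ) : Finset (ℕ × ℕ) :=
  (Finset.range l.length ×ˢ Finset.range (part l 0)).filter
    (fun p => part m p.1 ≤ p.2 ∧ p.2 < part l p.1)

/-- Row lengths of the skew diagram `l/m`. -/
def rowLens (l m : List ℕ) : List ℕ :=
  (List.range l.length).map (fun i => part l i - part m i)

section Aux

lemma part_eq_zero_of_le {l : List ℕ} {i : ℕ} (h : l.length ≤ i) : part l i = 0 := by
  rw [part, List.getD_eq_default _ _ h]

lemma part_mem {l : List ℕ} {i : ℕ} (h : i < l.length) : part l i ∈ l := by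
  rw [part, List.getD_eq_getElem _ _ h]; exact List.getElem_mem h

lemma part_anti {l : List ℕ} (hl : l.Pairwise (· ≥ ·)) {i j : ℕ} (h : i ≤ j) :
    part l j ≤ part l i := by
  rcases lt_or_ge j l.length with hj | hj
  · rcases eq_or_lt_of_le h with rfl | hij
    · exact le_refl _
    · have := List.pairwise_iff_get.mp hl ⟨i, lt_of_le_of_lt h hj⟩ ⟨j, hj⟩ hij
      simpa [part, List.getD_eq_getElem, hj, lt_of_le_of_lt h hj, List.get_eq_getElem] using this
  · simp [part_eq_zero_of_le hj]

lemma part_pos_iff {l : List ℕ} (hlpos : ∀ p ∈ l, 0 < p) {i : ℕ} :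
    0 < part l i ↔ i < l.length := by
  constructor
  · intro h
    by_contra hi
    rw [part_eq_zero_of_le (by omega)] at h
    omega
  · intro h
    exact hlpos _ (part_mem h)

/-- Galois: for sorted lists, `k < part x j ↔ j < conj x k`. -/
lemma galois {x : List ℕ} (hx : x.Pairwise (· ≥ ·)) (j k : ℕ) :
    k < part x j ↔ j < conj x k := by
  induction x generalizing j with
  | nil => simp [part, conj]
  | cons h t ih =>
    have ht : t.Pairwise (· ≥ ·) := hx.of_cons
    have hh : ∀ y ∈ t, y ≤ h := fun y hy => List.rel_of_pairwise_cons hx hy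
    rcases Nat.lt_or_ge k h with hk | hk
    · have : conj (h :: t) k = conj t k + 1 := by
        simp [conj, List.filter_cons, Nat.succ_le_of_lt hk, hk]
      rw [this]
      cases j with
      | zero => simp [part, hk]
      | succ j => simpa [part] using ih ht j
    · have hnil : (h :: t).filter (fun p => decide (k + 1 ≤ p)) = [] := by
        rw [List.filter_eq_nil_iff]
        intro a ha
        simp only [decide_eq_true_eq, not_le]
        rcases List.mem_cons.mp ha with rfl | ha
        · omega
        · have := hh a ha; omega
      have : conj (h :: t) k = 0 := by simp only [conj, hnil, List.length_nil]
      rw [this]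
      simp only [Nat.not_lt_zero, iff_false, not_lt]
      cases j with
      | zero => simpa [part] using hk
      | succ j =>
        have : part t j ≤ h := by
          rcases Nat.lt_or_ge j t.length with hj | hj
          · exact hh _ (part_mem hj)
          · simp [part_eq_zero_of_le hj]
        simp only [part, List.getD_cons_succ]
        exact le_trans this hk

lemma not_galois {x : List ℕ} (hx : x.Pairwise (· ≥ ·)) (j k : ℕ) :
    part x j ≤ k ↔ conj x k ≤ j := by
  have := galois hx j k
  omega

lemma filter_length_eq_card (f : ℕ → ℕ) (p : ℕ → Bool) (n : ℕ) :
    (((List.range n).map f).filter p).length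
      = ((Finset.range n).filter (fun i => p (f i) = true)).card := by
  induction n with
  | zero => simp
  | succ n ih =>
    rw [List.range_succ, Finset.range_add_one, List.map_append, List.filter_append,
      List.length_append, Finset.filter_insert]
    by_cases h : p (f n) = true
    · rw [if_pos h, Finset.card_insert_of_notMem (by simp)]
      simp [h, ih]
    · rw [if_neg h]
      simp [h, ih]

lemma part_tail (x : List ℕ) (k : ℕ) : part x.tail k = part x (k+1) := by
  cases x <;> simp [part]

lemma le_part_zero {x : List ℕ} (hx : x.Pairwise (· ≥ ·)) {v : ℕ} (hv : v ∈ x) :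
    v ≤ part x 0 := by
  cases x with
  | nil => simp at hv
  | cons h t =>
    rcases List.mem_cons.mp hv with rfl | hv
    · simp [part]
    · simpa [part] using List.rel_of_pairwise_cons hx hv

lemma part_zero_mem {x : List ℕ} (hx : x ≠ []) : part x 0 ∈ x := by
  cases x with
  | nil => simp at hx
  | cons h t => simp [part]

lemma exchange {c r : List ℕ} (hcs : c.Pairwise (· ≥ ·)) (hrs : r.Pairwise (· ≥ ·))
    (H : ∀ k, part c k = (r.filter (fun p => decide (k + 1 ≤ p))).length) :
    ∀ j, part r j = (c.filter (fun p => decide (j + 1 ≤ p))).length := by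
  intro j
  have key : ∀ k, k < part r j ↔ k < conj c j := by
    intro k
    rw [galois hrs j k]
    rw [show conj r k = part c k from (H k).symm]
    exact galois hcs k j
  have h1 := key (part r j)
  have h2 := key (conj c j)
  change _ = conj c j
  omega

lemma filter_eq_takeWhile {x : List ℕ} (hx : x.Pairwise (· ≥ ·)) (p : ℕ → Bool)
    (hp : ∀ u v, u ≤ v → p u = true → p v = true) : x.filter p = x.takeWhile p := by
  induction x with
  | nil => rfl
  | cons h t ih =>
    by_cases hph : p h = true
    · rw [List.filter_cons_of_pos hph, List.takeWhile_cons_of_pos hph, ih hx.of_cons]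
    · rw [List.filter_cons_of_neg (by simp [hph]), List.takeWhile_cons_of_neg (by simp [hph])]
      rw [List.filter_eq_nil_iff]
      intro a ha
      simp only [Bool.not_eq_true]
      cases hpa : p a
      · rfl
      · exact absurd (hp a h (List.rel_of_pairwise_cons hx ha) hpa) (by simp [hph])

lemma part_filter_eq {x : List ℕ} (hx : x.Pairwise (· ≥ ·)) (p : ℕ → Bool)
    (hp : ∀ u v, u ≤ v → p u = true → p v = true) {k : ℕ}
    (hk : k < (x.filter p).length) :
    part (x.filter p) k = part x k := by
  have hf : x.filter p = x.takeWhile p := filter_eq_takeWhile hx p hp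
  rw [hf] at hk ⊢
  conv_rhs => rw [← List.takeWhile_append_dropWhile (p := p) (l := x)]
  rw [part, part, List.getD_eq_getElem _ _ hk,
    List.getD_eq_getElem _ _ (by rw [List.length_append]; omega),
    List.getElem_append_left hk]

lemma range_split (t0 R : ℕ) (h : t0 < R) :
    List.range R = List.range t0 ++ t0 :: List.range' (t0+1) (R-1-t0) := by
  have h1 : R = (t0+1) + (R-1-t0) := by omega
  rw [h1, List.range_add, List.range_succ, List.append_assoc]
  have h2 : (List.range (R-1-t0)).map (t0+1+·) = List.range' (t0+1) (R-1-t0) := by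
    rw [List.range_eq_range', List.map_add_range']
  rw [h2]
  have h3 : R - 1 - t0 = (t0+1) + (R-1-t0) - 1 - t0 := by omega
  rw [← h3]
  rfl

lemma range_split3 (u v n : ℕ) (h1 : u ≤ v) (h2 : v ≤ n) :
    List.range n = (List.range u ++ List.range' u (v - u)) ++ List.range' v (n - v) := by
  rw [List.range_eq_range']
  have e1 : List.range u ++ List.range' u (v-u) = List.range' 0 v := by
    rw [List.range_eq_range']
    have := List.range'_append_1 (s := 0) (m := u) (n := v - u)
    simp only [Nat.zero_add] at this
    rw [this, show u + (v - u) = v from by omega]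
  rw [e1]
  have := List.range'_append_1 (s := 0) (m := v) (n := n - v)
  simp only [Nat.zero_add] at this
  rw [this, show v + (n - v) = n from by omega]

lemma sorted_map_range {f : ℕ → ℕ} {R : ℕ}
    (hf : ∀ t t', t ≤ t' → t' < R → f t' ≤ f t) :
    ((List.range R).map f).Pairwise (· ≥ ·) := by
  rw [List.pairwise_iff_get]
  intro i j hij
  simp only [List.get_eq_getElem, List.getElem_map, List.getElem_range]
  have hj : (j : ℕ) < R := by
    have := j.isLt
    simpa using this
  exact hf _ _ (le_of_lt hij) hj

lemma core (R : ℕ) : ∀ (a b : ℕ → ℕ)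
    (_ha : ∀ t t', t ≤ t' → t' < R → a t' ≤ a t)
    (_hb : ∀ t t', t ≤ t' → t' < R → b t' ≤ b t)
    (js : ℕ) (_hab : ∀ t, t < R → a t ≤ js ∧ js < b t)
    (q : List ℕ) (_hqs : q.Pairwise (· ≥ ·))
    (_hqp : q.Perm ((List.range R).map (fun t => b t - a t)))
    (_hcond : ∀ k, k < R → part q k = b k - a (R - 1 - k)),
    (∀ t, t < R → a t = a 0) ∨ (∀ t, t < R → b t = b 0) := by
  induction R using Nat.strong_induction_on with
  | _ R IH =>
  intro a b ha hb js hab q hqs hqp hcond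
  rcases Nat.lt_or_ge R 2 with hR | hR
  · left; intro t ht
    have : t = 0 := by omega
    rw [this]
  have hqlen : q.length = R := by rw [hqp.length_eq, List.length_map, List.length_range]
  have hqne : q ≠ [] := by intro h; rw [h] at hqlen; simp at hqlen; omega
  have hq0mem : part q 0 ∈ (List.range R).map (fun t => b t - a t) :=
    hqp.mem_iff.mp (part_zero_mem hqne)
  obtain ⟨t0, ht0R, ht0⟩ : ∃ t0, t0 < R ∧ b t0 - a t0 = part q 0 := by
    simpa using hq0mem
  have h0 := hcond 0 (by omega)
  simp only [Nat.sub_zero] at h0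
  have haR : a (R-1) ≤ a t0 := ha t0 (R-1) (by omega) (by omega)
  have hbt0 : b t0 ≤ b 0 := hb 0 t0 (by omega) ht0R
  have h1 := hab t0 ht0R
  have h2 := hab 0 (by omega)
  have h3 := hab (R-1) (by omega)
  have hkey : a t0 = a (R-1) ∧ b t0 = b 0 := by omega
  by_cases ht00 : t0 = 0
  · left
    intro t ht
    have e1 := ha 0 t (by omega) ht
    have e2 := ha t (R-1) (by omega) (by omega)
    have e3 : a 0 = a (R-1) := by rw [← ht00]; exact hkey.1
    omega
  by_cases ht0R1 : t0 = R - 1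
  · right
    intro t ht
    have e1 := hb 0 t (by omega) ht
    have e2 := hb t (R-1)  (by omega) (by omega)
    have : b (R-1) = b 0 := by rw [← ht0R1]; exact hkey.2
    omega
  -- now 0 < t0 < R - 1, set up recursion
  set a' : ℕ → ℕ := fun t => if t < t0 then a t else a (t+1) with ha'def
  set b' : ℕ → ℕ := fun t => if t < t0 then b t else b (t+1) with hb'def
  have haconst : ∀ t, t0 ≤ t → t < R → a t = a (R-1) := by
    intro t hta htb
    have e1 := ha t0 t hta htb
    have e2 := ha t (R-1) (by omega) (by omega)
    omega
  have hbconst : ∀ t, t ≤ t0 → b t = b 0 := by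
    intro t hta
    have e1 := hb 0 t (by omega) (by omega)
    have e2 := hb t t0 hta ht0R
    omega
  have ha' : ∀ t t', t ≤ t' → t' < R - 1 → a' t' ≤ a' t := by
    intro t t' htt ht'
    simp only [ha'def]
    split <;> split <;> apply ha <;> omega
  have hb' : ∀ t t', t ≤ t' → t' < R - 1 → b' t' ≤ b' t := by
    intro t t' htt ht'
    simp only [hb'def]
    split <;> split <;> apply hb <;> omega
  have hab' : ∀ t, t < R - 1 → a' t ≤ js ∧ js < b' t := by
    intro t ht
    simp only [ha'def, hb'def]
    constructor
    · split
      · exact (hab t (by omega)).1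
      · exact (hab (t+1) (by omega)).1
    · split
      · exact (hab t (by omega)).2
      · exact (hab (t+1) (by omega)).2
  have hqs' : q.tail.Pairwise (· ≥ ·) := hqs.tail
  -- permutation for the tail
  have hperm0 : ((List.range R).map (fun t => b t - a t)).Perm
      ((b t0 - a t0) :: (List.range (R-1)).map (fun t => b' t - a' t)) := by
    rw [range_split t0 R ht0R, List.map_append, List.map_cons]
    refine (List.perm_middle).trans ?_
    apply List.Perm.cons
    set n : ℕ := R - 1 - t0 with hn
    have h5 : R - 1 = t0 + n := by omega
    rw [h5, List.range_add, List.map_append]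
    apply List.Perm.append
    · apply List.Perm.of_eq
      apply List.map_congr_left
      intro t htmem
      rw [List.mem_range] at htmem
      simp only [ha'def, hb'def, if_pos htmem]
    · apply List.Perm.of_eq
      rw [show List.range' (t0+1) n = (List.range n).map ((t0+1)+·) from by
            rw [List.range_eq_range', List.map_add_range']]
      rw [List.map_map, List.map_map]
      apply List.map_congr_left
      intro t _
      simp only [Function.comp_apply, ha'def, hb'def,
        if_neg (by omega : ¬ t0 + t < t0)]
      rw [show t0+1+t = t0+t+1 from by omega]
  have hq : q = part q 0 :: q.tail := by
    cases q with
    | nil => exact absurd rfl hqne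
    | cons y ys => simp [part]
  have hqtail : q.tail.Perm ((List.range (R-1)).map (fun t => b' t - a' t)) := by
    have h6 : (part q 0 :: q.tail).Perm
        ((b t0 - a t0) :: (List.range (R-1)).map (fun t => b' t - a' t)) := by
      rw [← hq]
      exact hqp.trans hperm0
    rw [ht0] at h6
    exact h6.cons_inv
  have hcond' : ∀ k, k < R-1 → part q.tail k = b' k - a' (R-1-1-k) := by
    intro k hk
    rw [part_tail, hcond (k+1) (by omega)]
    have hbk : b' k = b (k+1) := by
      simp only [hb'def]
      by_cases hlt : k < t0
      · rw [if_pos hlt, hbconst k (by omega), hbconst (k+1) (by omega)]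
      · rw [if_neg hlt]
    have hak : a' (R-1-1-k) = a (R-1-(k+1)) := by
      simp only [ha'def]
      by_cases hlt : R-1-1-k < t0
      · rw [if_pos hlt, show R-1-1-k = R-1-(k+1) from by omega]
      · rw [if_neg hlt, haconst (R-1-1-k+1) (by omega) (by omega),
          haconst (R-1-(k+1)) (by omega) (by omega)]
    rw [hbk, hak]
  rcases IH (R-1) (by omega) a' b' ha' hb' js hab' q.tail hqs' hqtail hcond' with hA | hB
  · left
    intro t ht
    have e0 : a' 0 = a 0 := by simp only [ha'def]; rw [if_pos (show (0:ℕ) < t0 by omega)]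
    have e1 : a' (R-1-1) = a (R-1) := by
      simp only [ha'def]
      rw [if_neg (by omega : ¬ R-1-1 < t0), show R-1-1+1 = R-1 from by omega]
    have e2 := hA (R-1-1) (by omega)
    have e3 := ha 0 t (by omega) ht
    have e4 := ha t (R-1) (by omega) (by omega)
    omega
  · right
    intro t ht
    have e0 : b' 0 = b 0 := by simp only [hb'def]; rw [if_pos (show (0:ℕ) < t0 by omega)]
    have e1 : b' (R-1-1) = b (R-1) := by
      simp only [hb'def]
      rw [if_neg (by omega : ¬ R-1-1 < t0), show R-1-1+1 = R-1 from by omega]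
    have e2 := hB (R-1-1) (by omega)
    have e3 := hb 0 t (by omega) ht
    have e4 := hb t (R-1) (by omega) (by omega)
    omega

end Aux

section Skew

lemma mem_skewCells {l m : List ℕ} (hls : l.Pairwise (· ≥ ·)) (hlpos : ∀ p ∈ l, 0 < p)
    {i j : ℕ} : (i, j) ∈ skewCells l m ↔ part m i ≤ j ∧ j < part l i := by
  simp only [skewCells, Finset.mem_filter, Finset.mem_product, Finset.mem_range]
  constructor
  · rintro ⟨⟨_, _⟩, h⟩; exact h
  · rintro ⟨h1, h2⟩
    refine ⟨⟨?_, lt_of_lt_of_le h2 (part_anti hls (Nat.zero_le i))⟩, h1, h2⟩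
    rw [← part_pos_iff hlpos]
    omega

lemma skew_row_card {l m : List ℕ} (hls : l.Pairwise (· ≥ ·)) (hlpos : ∀ p ∈ l, 0 < p)
    (i : ℕ) :
    ((skewCells l m).filter (fun p => p.1 = i)).card = part l i - part m i := by
  have : (skewCells l m).filter (fun p => p.1 = i)
      = (Finset.Ico (part m i) (part l i)).image (fun j => (i, j)) := by
    ext ⟨x, y⟩
    simp only [Finset.mem_filter, Finset.mem_image, Finset.mem_Ico]
    constructor
    · rintro ⟨hmem, rfl⟩
      exact ⟨y, (mem_skewCells hls hlpos).mp hmem, rfl⟩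
    · rintro ⟨j, hj, hji⟩
      rw [Prod.mk.injEq] at hji
      obtain ⟨rfl, rfl⟩ := hji
      exact ⟨(mem_skewCells hls hlpos).mpr hj, rfl⟩
  rw [this, Finset.card_image_of_injective _ (fun u v huv => by injection huv), Nat.card_Ico]

lemma rfilter_eq_card {l m r : List ℕ} (hr : r.Perm (rowLens l m)) (k : ℕ) :
    (r.filter (fun p => decide (k + 1 ≤ p))).length
      = ((Finset.range l.length).filter (fun i => k + 1 ≤ part l i - part m i)).card := by
  rw [(hr.filter _).length_eq, rowLens, filter_length_eq_card]
  congr 1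
  ext i
  simp

/-- From the cells equation, the row counts determine `part l i - part m i`. -/
lemma row_card_from_translate {l m : List ℕ} (hls : l.Pairwise (· ≥ ·))
    (hlpos : ∀ p ∈ l, 0 < p) {ν : YoungDiagram} {dr dc : ℕ}
    (hE : skewCells l m = ν.cells.image (fun p => (p.1 + dr, p.2 + dc))) (i : ℕ) :
    part l i - part m i = if dr ≤ i then ν.rowLen (i - dr) else 0 := by
  rw [← skew_row_card hls hlpos i, hE, Finset.filter_image]
  have hinj : Function.Injective (fun p : ℕ × ℕ => (p.1 + dr, p.2 + dc)) := by
    rintro ⟨x1, y1⟩ ⟨x2, y2⟩ h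
    simp only [Prod.mk.injEq] at h ⊢
    omega
  rw [Finset.card_image_of_injective _ hinj]
  by_cases hdr : dr ≤ i
  · rw [if_pos hdr]
    rw [YoungDiagram.rowLen_eq_card]
    congr 1
    rw [YoungDiagram.row]
    apply Finset.filter_congr
    intro ⟨x, y⟩ _
    simp only [decide_eq_true_eq]
    omega
  · rw [if_neg hdr]
    rw [Finset.card_eq_zero, Finset.filter_eq_empty_iff]
    intro ⟨x, y⟩ _
    simp only
    omega

lemma row_card_from_rotation {l m : List ℕ} (hls : l.Pairwise (· ≥ ·))
    (hlpos : ∀ p ∈ l, 0 < p) {ν : YoungDiagram} {dr dc : ℕ}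
    (hbd : ∀ p ∈ ν.cells, p.1 ≤ dr ∧ p.2 ≤ dc)
    (hE : skewCells l m = ν.cells.image (fun p => (dr - p.1, dc - p.2))) (i : ℕ) :
    part l i - part m i = if i ≤ dr then ν.rowLen (dr - i) else 0 := by
  rw [← skew_row_card hls hlpos i, hE, Finset.filter_image]
  rw [Finset.card_image_of_injOn (by
    rintro ⟨x1, y1⟩ hx ⟨x2, y2⟩ hy h
    simp only [Finset.coe_filter, Set.mem_setOf_eq] at hx hy
    have b1 := hbd _ hx.1
    have b2 := hbd _ hy.1
    simp only [Prod.mk.injEq] at h ⊢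
    simp only at b1 b2
    omega)]
  by_cases hdr : i ≤ dr
  · rw [if_pos hdr]
    rw [YoungDiagram.rowLen_eq_card]
    congr 1
    rw [YoungDiagram.row]
    apply Finset.filter_congr
    intro ⟨x, y⟩ hxy
    have := hbd _ hxy
    simp only [decide_eq_true_eq]
    simp only at this
    omega
  · rw [if_neg hdr]
    rw [Finset.card_eq_zero, Finset.filter_eq_empty_iff]
    intro ⟨x, y⟩ hxy
    have := hbd _ hxy
    simp only at this ⊢
    omega

lemma count_eq_colLen_translate {l m : List ℕ} (hlpos : ∀ p ∈ l, 0 < p)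
    {ν : YoungDiagram} {dr : ℕ}
    (hform : ∀ i, part l i - part m i = if dr ≤ i then ν.rowLen (i - dr) else 0) (k : ℕ) :
    ((Finset.range l.length).filter (fun i => k + 1 ≤ part l i - part m i)).card
      = ν.colLen k := by
  have hset : (Finset.range l.length).filter (fun i => k + 1 ≤ part l i - part m i)
      = Finset.Ico dr (dr + ν.colLen k) := by
    ext i
    simp only [Finset.mem_filter, Finset.mem_range, Finset.mem_Ico]
    constructor
    · rintro ⟨-, hk⟩
      rw [hform i] at hk
      have hdr : dr ≤ i := by by_contra h; rw [if_neg h] at hk; omega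
      rw [if_pos hdr] at hk
      have : (i - dr, k) ∈ ν := YoungDiagram.mem_iff_lt_rowLen.mpr (by omega)
      have := YoungDiagram.mem_iff_lt_colLen.mp this
      omega
    · rintro ⟨h1, h2⟩
      have : (i - dr, k) ∈ ν := YoungDiagram.mem_iff_lt_colLen.mpr (by omega)
      have hrl := YoungDiagram.mem_iff_lt_rowLen.mp this
      have hdiff : k + 1 ≤ part l i - part m i := by
        rw [hform i, if_pos h1]; omega
      refine ⟨?_, hdiff⟩
      rw [← part_pos_iff (l := l) hlpos]
      omega
  rw [hset, Nat.card_Ico]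
  omega

lemma count_eq_colLen_rotation {l m : List ℕ} (hlpos : ∀ p ∈ l, 0 < p)
    {ν : YoungDiagram} {dr : ℕ}
    (hbd : ∀ p ∈ ν.cells, p.1 ≤ dr)
    (hform : ∀ i, part l i - part m i = if i ≤ dr then ν.rowLen (dr - i) else 0) (k : ℕ) :
    ((Finset.range l.length).filter (fun i => k + 1 ≤ part l i - part m i)).card
      = ν.colLen k := by
  have hcl : ν.colLen k ≤ dr + 1 := by
    by_contra h
    have : (dr + 1, k) ∈ ν := YoungDiagram.mem_iff_lt_colLen.mpr (by omega)
    have := hbd _ ((YoungDiagram.mem_cells _).mpr this)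
    omega
  have hset : (Finset.range l.length).filter (fun i => k + 1 ≤ part l i - part m i)
      = Finset.Ico (dr + 1 - ν.colLen k) (dr + 1) := by
    ext i
    simp only [Finset.mem_filter, Finset.mem_range, Finset.mem_Ico]
    constructor
    · rintro ⟨-, hk⟩
      rw [hform i] at hk
      have hdr : i ≤ dr := by by_contra h; rw [if_neg h] at hk; omega
      rw [if_pos hdr] at hk
      have : (dr - i, k) ∈ ν := YoungDiagram.mem_iff_lt_rowLen.mpr (by omega)
      have := YoungDiagram.mem_iff_lt_colLen.mp this
      omega
    · rintro ⟨h1, h2⟩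
      have : (dr - i, k) ∈ ν := YoungDiagram.mem_iff_lt_colLen.mpr (by omega)
      have hrl := YoungDiagram.mem_iff_lt_rowLen.mp this
      have hdiff : k + 1 ≤ part l i - part m i := by
        rw [hform i, if_pos (by omega)]; omega
      refine ⟨?_, hdiff⟩
      rw [← part_pos_iff (l := l) hlpos]
      omega
  rw [hset, Nat.card_Ico]
  omega

end Skew

/-- For a skew diagram `l/m` with `c` the decreasing sort of the column lengths
and `r` the decreasing sort of the row lengths: `cols(l/m) = rows(l/m)'` holds
iff `l/m` is a translate of the Young diagram of some partition `ν` or of the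
π-rotation of one; and in that case `cols(l/m) = rows(l/m)' = ν'`. -/
theorem cols_eq_rowsConj_iff_partition_or_rotation
    (nl nm : ℕ) (l m : List ℕ)
    (hl : IsPartitionOf nl l) (hm : IsPartitionOf nm m)
    (hsub : ∀ i, part m i ≤ part l i)
    (c r : List ℕ) (hc : c.Perm (colLens l m)) (hcs : c.Pairwise (· ≥ ·))
    (hr : r.Perm (rowLens l m)) (hrs : r.Pairwise (· ≥ ·)) :
    (∀ k, part c k = (r.filter (fun p => decide (k + 1 ≤ p))).length) ↔
      ((∃ ν : YoungDiagram, ∃ dr dc : ℕ,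
          skewCells l m = ν.cells.image (fun p => (p.1 + dr, p.2 + dc)) ∧
          ∀ k, part c k = ν.colLen k) ∨
       (∃ ν : YoungDiagram, ∃ dr dc : ℕ,
          (∀ p ∈ ν.cells, p.1 ≤ dr ∧ p.2 ≤ dc) ∧
          skewCells l m = ν.cells.image (fun p => (dr - p.1, dc - p.2)) ∧
          ∀ k, part c k = ν.colLen k)) := by
  obtain ⟨hls, hlpos, -⟩ := hl
  obtain ⟨hms, hmpos, -⟩ := hm
  constructor
  · intro H
    have hH0 : part c 0 = ((Finset.range l.length).filter
        (fun i => 0 + 1 ≤ part l i - part m i)).card := by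
      rw [H 0, rfilter_eq_card hr 0]
    set R : ℕ := ((Finset.range l.length).filter
        (fun i => 0 + 1 ≤ part l i - part m i)).card with hRdef
    by_cases hR0 : R = 0
    · -- empty diagram
      left
      have hempty : ∀ i, i < l.length → ¬ (0 + 1 ≤ part l i - part m i) := by
        intro i hi hcon
        have hmem : i ∈ (Finset.range l.length).filter
            (fun i => 0 + 1 ≤ part l i - part m i) :=
          Finset.mem_filter.mpr ⟨Finset.mem_range.mpr hi, hcon⟩
        have hcz : (Finset.range l.length).filter
            (fun i => 0 + 1 ≤ part l i - part m i) = ∅ :=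
          Finset.card_eq_zero.mp (by rw [← hRdef]; exact hR0)
        rw [hcz] at hmem
        exact absurd hmem (Finset.notMem_empty _)
      refine ⟨⊥, 0, 0, ?_, ?_⟩
      · rw [YoungDiagram.cells_bot, Finset.image_empty, Finset.eq_empty_iff_forall_notMem]
        rintro ⟨i, j⟩ hmem
        rw [mem_skewCells hls hlpos] at hmem
        have hi : i < l.length := by rw [← part_pos_iff hlpos]; omega
        exact hempty i hi (by omega)
      · intro k
        have h1 : part c k ≤ part c 0 := part_anti hcs (Nat.zero_le k)
        have h2 : (⊥ : YoungDiagram).colLen k = 0 := by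
          by_contra h
          have hmem : (0, k) ∈ (⊥ : YoungDiagram) :=
            YoungDiagram.mem_iff_lt_colLen.mpr (by omega)
          rw [← YoungDiagram.mem_cells, YoungDiagram.cells_bot] at hmem
          exact absurd hmem (Finset.notMem_empty _)
        omega
    · -- R ≥ 1
      have hRpos : 0 < R := Nat.pos_of_ne_zero hR0
      have hcne : c ≠ [] := by
        intro h
        rw [h] at hH0
        simp only [part, List.getD] at hH0
        simp at hH0
        omega
      have hRmem : R ∈ colLens l m := hc.mem_iff.mp (hH0 ▸ part_zero_mem hcne)
      obtain ⟨js, hjsr, hjs2⟩ : ∃ j, j < part l 0 ∧ conj l j - conj m j = R := by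
        rw [colLens] at hRmem
        obtain ⟨j, hj1, hj2⟩ := List.mem_map.mp hRmem
        exact ⟨j, List.mem_range.mp hj1, hj2⟩
      set s := conj m js with hsdef
      have hconjl : conj l js = s + R := by rw [hsdef]; omega
      have hrow : ∀ t, t < R → part m (s + t) ≤ js ∧ js < part l (s + t) := by
        intro t ht
        constructor
        · exact (not_galois hms (s+t) js).mpr (by omega)
        · exact (galois hls (s+t) js).mpr (by omega)
      have hconjl_le : s + R ≤ l.length := by
        rw [← hconjl]
        exact List.length_filter_le _ _
      have hNE : (Finset.range l.length).filter (fun i => 0 + 1 ≤ part l i - part m i)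
          = Finset.Ico s (s + R) := by
        symm
        apply Finset.eq_of_subset_of_card_le
        · intro i hi
          rw [Finset.mem_Ico] at hi
          have h1 : part m i ≤ js := (not_galois hms i js).mpr (by omega)
          have h2 : js < part l i := (galois hls i js).mpr (by omega)
          refine Finset.mem_filter.mpr ⟨Finset.mem_range.mpr ?_, by omega⟩
          rw [← part_pos_iff hlpos]; omega
        · rw [Nat.card_Ico, ← hRdef]
          omega
      have hNEiff : ∀ i, (0 + 1 ≤ part l i - part m i) ↔ (s ≤ i ∧ i < s + R) := by
        intro i
        constructor
        · intro h
          have hi : i < l.length := by rw [← part_pos_iff hlpos]; omega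
          have hmem : i ∈ Finset.Ico s (s+R) := by
            rw [← hNE]; exact Finset.mem_filter.mpr ⟨Finset.mem_range.mpr hi, h⟩
          simpa [Finset.mem_Ico] using hmem
        · intro hi
          have h3 := hrow (i - s) (by omega)
          rw [show s + (i - s) = i from by omega] at h3
          omega
      have key : ∀ k, k < R → part r k
          = part l (s + k) - part m (s + (R - 1 - k)) := by
        intro k hk
        rw [exchange hcs hrs H k, (hc.filter _).length_eq, colLens, filter_length_eq_card]
        have hset : (Finset.range (part l 0)).filter
            (fun j => decide (k + 1 ≤ conj l j - conj m j) = true)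
            = Finset.Ico (part m (s + (R - 1 - k))) (part l (s + k)) := by
          ext j
          simp only [Finset.mem_filter, Finset.mem_range, Finset.mem_Ico, decide_eq_true_eq]
          constructor
          · rintro ⟨hj0, hjk⟩
            have hcml : conj m j + (k+1) ≤ conj l j := by omega
            have hr1 : part m (conj m j) ≤ j := (not_galois hms (conj m j) j).mpr le_rfl
            have hr2 : j < part l (conj l j - 1) := (galois hls (conj l j - 1) j).mpr (by omega)
            have hne1 : s ≤ conj m j ∧ conj m j < s + R := by
              rw [← hNEiff]
              have : j < part l (conj m j) := (galois hls (conj m j) j).mpr (by omega)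
              omega
            have hne2 : s ≤ conj l j - 1 ∧ conj l j - 1 < s + R := by
              rw [← hNEiff]
              have : part m (conj l j - 1) ≤ j := (not_galois hms (conj l j - 1) j).mpr (by omega)
              omega
            constructor
            · have hmono := part_anti hms
                (show conj m j ≤ s + (R-1-k) from by omega)
              omega
            · have hmono := part_anti hls
                (show s + k ≤ conj l j - 1 from by omega)
              omega
          · rintro ⟨h1, h2⟩
            have hjlt : j < part l 0 := lt_of_lt_of_le h2 (part_anti hls (Nat.zero_le _))
            refine ⟨hjlt, ?_⟩
            rcases le_or_gt js j with hcase | hcase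
            · have hclj : s + k < conj l j := (galois hls (s+k) j).mp h2
              have hcmj : conj m j ≤ s + 0 := by
                have h0 := (hrow 0 (by omega)).1
                exact (not_galois hms (s+0) j).mp (by omega)
              omega
            · have hclj : s + (R - 1) < conj l j := by
                refine (galois hls (s + (R-1)) j).mp ?_
                have := (hrow (R-1) (by omega)).2
                omega
              have hcmj : conj m j ≤ s + (R - 1 - k) := (not_galois hms _ j).mp h1
              omega
        rw [hset, Nat.card_Ico]
      -- set up core
      set a : ℕ → ℕ := fun t => part m (s + t) with hadef
      set b : ℕ → ℕ := fun t => part l (s + t) with hbdef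
      have ha : ∀ t t', t ≤ t' → t' < R → a t' ≤ a t := by
        intro t t' h _
        simp only [hadef]
        exact part_anti hms (by omega)
      have hb : ∀ t t', t ≤ t' → t' < R → b t' ≤ b t := by
        intro t t' h _
        simp only [hbdef]
        exact part_anti hls (by omega)
      have hmonop : ∀ (u v : ℕ), u ≤ v →
          (decide (0 + 1 ≤ u)) = true → (decide (0 + 1 ≤ v)) = true := by
        intro u v huv h
        simp only [decide_eq_true_eq] at h ⊢
        omega
      have hqs : (r.filter (fun p => decide (0 + 1 ≤ p))).Pairwise (· ≥ ·) := hrs.filter _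
      have hdiffab : ∀ i, s ≤ i → i < s + R →
          part l i - part m i = b (i - s) - a (i - s) := by
        intro i h1 h2
        simp only [hadef, hbdef]
        rw [show s + (i - s) = i from by omega]
      have hqperm : (r.filter (fun p => decide (0 + 1 ≤ p))).Perm
          ((List.range R).map (fun t => b t - a t)) := by
        refine (hr.filter _).trans ?_
        rw [rowLens, range_split3 s (s+R) l.length (by omega) hconjl_le,
          List.map_append, List.map_append, List.filter_append, List.filter_append]
        have e1 : ((List.range s).map (fun i => part l i - part m i)).filter
            (fun p => decide (0 + 1 ≤ p)) = [] := by
          rw [List.filter_eq_nil_iff]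
          intro x hx
          obtain ⟨i, hi, rfl⟩ := List.mem_map.mp hx
          rw [List.mem_range] at hi
          have := hNEiff i
          simp only [decide_eq_true_eq]
          omega
        have e3 : ((List.range' (s+R) (l.length - (s+R))).map
            (fun i => part l i - part m i)).filter (fun p => decide (0 + 1 ≤ p)) = [] := by
          rw [List.filter_eq_nil_iff]
          intro x hx
          obtain ⟨i, hi, rfl⟩ := List.mem_map.mp hx
          rw [List.mem_range'_1] at hi
          have := hNEiff i
          simp only [decide_eq_true_eq]
          omega
        have e2 : ((List.range' s (s + R - s)).map (fun i => part l i - part m i)).filter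
            (fun p => decide (0 + 1 ≤ p)) = (List.range R).map (fun t => b t - a t) := by
          rw [List.filter_eq_self.mpr]
          · rw [show s + R - s = R from by omega,
              show List.range' s R = (List.range R).map (s + ·) from by
                rw [List.range_eq_range', List.map_add_range']; norm_num,
              List.map_map]
            apply List.map_congr_left
            intro t ht
            rw [List.mem_range] at ht
            simp only [Function.comp_apply, hadef, hbdef]
          · intro x hx
            obtain ⟨i, hi, rfl⟩ := List.mem_map.mp hx
            rw [List.mem_range'_1] at hi
            simp only [decide_eq_true_eq]
            have := hNEiff i
            omega
        rw [e1, e2, e3, List.nil_append, List.append_nil]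
      have hqlen : (r.filter (fun p => decide (0 + 1 ≤ p))).length = R := by
        rw [hqperm.length_eq, List.length_map, List.length_range]
      have hqcond : ∀ k, k < R → part (r.filter (fun p => decide (0 + 1 ≤ p))) k
          = b k - a (R - 1 - k) := by
        intro k hk
        rw [part_filter_eq hrs _ hmonop (by rw [hqlen]; omega)]
        rw [key k hk]
      have hcount : ∀ k, part c k = ((Finset.range l.length).filter
          (fun i => k + 1 ≤ part l i - part m i)).card := by
        intro k
        rw [H k, rfilter_eq_card hr k]
      rcases core R a b ha hb js hrow _ hqs hqperm hqcond with hA | hB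
      · -- straight partition: left
        left
        have hdsort : ((List.range R).map (fun t => b t - a t)).Pairwise (· ≥ ·) := by
          apply sorted_map_range
          intro t t' htt' ht'
          have h1 := hb t t' htt' ht'
          have h2 := hA t (by omega)
          have h3 := hA t' ht'
          have h4 := (hrow t' ht')
          simp only [hadef, hbdef] at *
          omega
        set ν := YoungDiagram.ofRowLens _ hdsort.sortedGE with hνdef
        have hmemν : ∀ t u : ℕ, ((t, u) ∈ ν) ↔ (t < R ∧ u < b t - a t) := by
          intro t u
          rw [hνdef, YoungDiagram.mem_ofRowLens]
          simp only [List.length_map, List.length_range, List.getElem_map, List.getElem_range]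
          exact exists_prop ..
        refine ⟨ν, s, a 0, ?_, ?_⟩
        · ext ⟨i, j⟩
          rw [mem_skewCells hls hlpos]
          simp only [Finset.mem_image, YoungDiagram.mem_cells]
          constructor
          · rintro ⟨h1, h2⟩
            have hIco : s ≤ i ∧ i < s + R := by
              rw [← hNEiff]; omega
            have hd := hdiffab i hIco.1 hIco.2
            have ha0 : a (i - s) = a 0 := hA _ (by omega)
            have ham : a (i - s) = part m i := by
              simp only [hadef]; rw [show s + (i - s) = i from by omega]
            have hbl : b (i - s) = part l i := by
              simp only [hbdef]; rw [show s + (i - s) = i from by omega]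
            refine ⟨(i - s, j - a 0), (hmemν _ _).mpr ⟨by omega, by omega⟩, ?_⟩
            simp only [Prod.mk.injEq]
            omega
          · rintro ⟨⟨t, u⟩, hmem, heq⟩
            rw [hmemν] at hmem
            simp only [Prod.mk.injEq] at heq
            obtain ⟨rfl, rfl⟩ := heq
            have h4 := hrow t hmem.1
            have ham : a t = part m (s + t) := by simp only [hadef]
            have hbl : b t = part l (s + t) := by simp only [hbdef]
            have ha0 : a t = a 0 := hA _ hmem.1
            rw [add_comm t s]
            constructor <;> omega
        · intro k
          rw [hcount k]
          have hset : (Finset.range l.length).filter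
              (fun i => k + 1 ≤ part l i - part m i)
              = Finset.Ico s (s + ν.colLen k) := by
            ext i
            simp only [Finset.mem_filter, Finset.mem_range, Finset.mem_Ico]
            constructor
            · rintro ⟨hi, hk'⟩
              have hIco : s ≤ i ∧ i < s + R := by rw [← hNEiff]; omega
              have hd := hdiffab i hIco.1 hIco.2
              have hmem : (i - s, k) ∈ ν := (hmemν _ _).mpr ⟨by omega, by omega⟩
              have := YoungDiagram.mem_iff_lt_colLen.mp hmem
              omega
            · rintro ⟨h1, h2⟩
              have hmem : (i - s, k) ∈ ν := YoungDiagram.mem_iff_lt_colLen.mpr (by omega)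
              rw [hmemν] at hmem
              have hd := hdiffab i h1 (by omega)
              have hilen : i < l.length := by
                rw [← part_pos_iff hlpos]
                have := hNEiff i
                omega
              exact ⟨hilen, by omega⟩
          rw [hset, Nat.card_Ico]
          omega
      · -- rotated partition: right
        right
        have hb0pos : 0 < b 0 := by
          have := hrow 0 (by omega)
          simp only [hbdef]
          omega
        have hdsort : ((List.range R).map (fun t => b (R-1-t) - a (R-1-t))).Pairwise (· ≥ ·) := by
          apply sorted_map_range
          intro t t' htt' ht'
          have h1 := ha (R-1-t') (R-1-t) (by omega) (by omega)
          have h2 := hB (R-1-t) (by omega)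
          have h3 := hB (R-1-t') (by omega)
          omega
        set ν := YoungDiagram.ofRowLens _ hdsort.sortedGE with hνdef
        have hmemν : ∀ t u : ℕ, ((t, u) ∈ ν) ↔ (t < R ∧ u < b (R-1-t) - a (R-1-t)) := by
          intro t u
          rw [hνdef, YoungDiagram.mem_ofRowLens]
          simp only [List.length_map, List.length_range, List.getElem_map, List.getElem_range]
          exact exists_prop ..
        refine ⟨ν, s + (R - 1), b 0 - 1, ?_, ?_, ?_⟩
        · rintro ⟨t, u⟩ hmem
          rw [YoungDiagram.mem_cells, hmemν] at hmem
          obtain ⟨h1, h2⟩ := hmem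
          have h3 := hrow (R-1-t) (by omega)
          have h4 := hB (R-1-t) (by omega)
          constructor
          · simp only; omega
          · simp only; omega
        · ext ⟨i, j⟩
          rw [mem_skewCells hls hlpos]
          simp only [Finset.mem_image, YoungDiagram.mem_cells]
          constructor
          · rintro ⟨h1, h2⟩
            have hIco : s ≤ i ∧ i < s + R := by
              rw [← hNEiff]; omega
            have ham : a (i - s) = part m i := by
              simp only [hadef]; rw [show s + (i - s) = i from by omega]
            have hbl : b (i - s) = part l i := by
              simp only [hbdef]; rw [show s + (i - s) = i from by omega]
            have hb0 : b (i - s) = b 0 := hB _ (by omega)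
            refine ⟨(R - 1 - (i - s), b 0 - 1 - j), (hmemν _ _).mpr ⟨by omega, ?_⟩, ?_⟩
            · rw [show R - 1 - (R - 1 - (i - s)) = i - s from by omega]
              omega
            · simp only [Prod.mk.injEq]
              omega
          · rintro ⟨⟨t, u⟩, hmem, heq⟩
            rw [hmemν] at hmem
            simp only [Prod.mk.injEq] at heq
            obtain ⟨rfl, rfl⟩ := heq
            obtain ⟨h1, h2⟩ := hmem
            have h3 := hrow (R-1-t) (by omega)
            have h4 := hB (R-1-t) (by omega)
            have ham : a (R-1-t) = part m (s + (R-1-t)) := by simp only [hadef]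
            have hbl : b (R-1-t) = part l (s + (R-1-t)) := by simp only [hbdef]
            rw [show s + (R - 1) - t = s + (R-1-t) from by omega]
            constructor <;> omega
        · intro k
          rw [hcount k]
          have hclR : ν.colLen k ≤ R := by
            by_contra hcon
            have hmem : (R, k) ∈ ν := YoungDiagram.mem_iff_lt_colLen.mpr (by omega)
            rw [hmemν] at hmem
            omega
          have hset : (Finset.range l.length).filter
              (fun i => k + 1 ≤ part l i - part m i)
              = Finset.Ico (s + R - ν.colLen k) (s + R) := by
            ext i
            simp only [Finset.mem_filter, Finset.mem_range, Finset.mem_Ico]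
            constructor
            · rintro ⟨hi, hk'⟩
              have hIco : s ≤ i ∧ i < s + R := by rw [← hNEiff]; omega
              have hd := hdiffab i hIco.1 hIco.2
              have hmem : (R - 1 - (i - s), k) ∈ ν := by
                rw [hmemν]
                rw [show R - 1 - (R - 1 - (i - s)) = i - s from by omega]
                exact ⟨by omega, by omega⟩
              have := YoungDiagram.mem_iff_lt_colLen.mp hmem
              omega
            · rintro ⟨h1, h2⟩
              have hmem : (R - 1 - (i - s), k) ∈ ν :=
                YoungDiagram.mem_iff_lt_colLen.mpr (by omega)
              rw [hmemν] at hmem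
              rw [show R - 1 - (R - 1 - (i - s)) = i - s from by omega] at hmem
              have hd := hdiffab i (by omega) (by omega)
              have hilen : i < l.length := by
                rw [← part_pos_iff hlpos]
                have := hNEiff i
                omega
              exact ⟨hilen, by omega⟩
          rw [hset, Nat.card_Ico]
          omega

  · rintro (⟨ν, dr, dc, hE, hcol⟩ | ⟨ν, dr, dc, hbd, hE, hcol⟩)
    · intro k
      rw [hcol k, rfilter_eq_card hr k]
      exact (count_eq_colLen_translate hlpos (row_card_from_translate hls hlpos hE) k).symm
    · intro k
      rw [hcol k, rfilter_eq_card hr k]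
      exact (count_eq_colLen_rotation hlpos (fun p hp => (hbd p hp).1)
          (row_card_from_rotation hls hlpos hbd hE) k).symm
end
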